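/- Given q ∈ R, a curl-free (conservative) initial angular velocity ζ_0 ∈ H^q_∥(T^3; R^3) generates a potential microflow ζ = T_{α/j, (α+3β)/(3j), γ/j, 2κ/j}(ζ_0) which is smooth on (0,∞) × T^3, satisfies j∂_t ζ − (α+γ)Δζ − (α/3 + β − γ)∇div ζ + 2κζ = 0 with curl ζ = 0 for all time, and attains ζ(0) = ζ_0 in the H^q topology. In particular (u, p, ω) = (0, 0, ζ) solves the incompressible micropolar equations with zero force and microtorque. -/

import Mathlib

set_option maxHeartbeats 1000000


open Filter

noncomputable section

abbrev TCoeffs : Type := (Fin 3 → ℤ) → EuclideanSpace ℂ (Fin 3)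

def kns (k : Fin 3 → ℤ) : ℝ := ∑ i, ((k i : ℝ)) ^ 2

def kC (k : Fin 3 → ℤ) : EuclideanSpace ℂ (Fin 3) := WithLp.toLp 2 (fun i => (k i : ℂ))

def dotk (k : Fin 3 → ℤ) (v : EuclideanSpace ℂ (Fin 3)) : ℂ := ∑ i, (k i : ℂ) * v i

def RealSym (c : TCoeffs) : Prop := ∀ k i, (starRingEnd ℂ) (c k i) = c (-k) i

/-- The potential microflow generated by a conservative field `ζ₀`: the solution of the
damped Lamé flow, which on conservative (parallel) fields is the damped heat semigroup
`ζ(t)^(k) = exp(−(t/j)(4π²(4α/3+β)|k|² + 2κ)) ζ₀^(k)`. -/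
def potentialMicroflow (j α β κ : ℝ) (ζ₀ : TCoeffs) (t : ℝ) : TCoeffs :=
  fun k => Real.exp (-(t / j) * (4 * Real.pi ^ 2 * (4 * α / 3 + β) * kns k + 2 * κ)) • ζ₀ k

lemma kns_nonneg (k : Fin 3 → ℤ) : 0 ≤ kns k :=
  Finset.sum_nonneg fun i _ => sq_nonneg _

/-- Polynomial times decaying exponential is bounded on `[0,∞)`. -/
lemma aux_poly_exp_bound (r c : ℝ) (hc : 0 < c) :
    ∃ M : ℝ, ∀ x : ℝ, 0 ≤ x → (1 + x) ^ r * Real.exp (-(c * x)) ≤ M := by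
  obtain ⟨n, hn⟩ := exists_nat_ge (max r (c / 2))
  have hnr : r ≤ (n : ℝ) := le_trans (le_max_left _ _) hn
  have hnc : c / 2 ≤ (n : ℝ) := le_trans (le_max_right _ _) hn
  have hn0 : 0 < (n : ℝ) := lt_of_lt_of_le (by positivity) hnc
  refine ⟨(2 * n / c) ^ n, fun x hx => ?_⟩
  have h1x : (1:ℝ) ≤ 1 + x := by linarith
  have h1 : (1 + x) ^ r ≤ (1 + x) ^ (n : ℕ) := by
    rw [← Real.rpow_natCast (1 + x) n]
    exact Real.rpow_le_rpow_of_exponent_le h1x hnr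
  have h2n : (1:ℝ) ≤ 2 * n / c := by
    rw [le_div_iff₀ hc]; linarith
  have h2 : 1 + x ≤ (2 * n / c) * Real.exp (c * x / (2 * n)) :=
    calc 1 + x ≤ 2 * n / c + x := by linarith
    _ = (2 * n / c) * (1 + c * x / (2 * n)) := by field_simp
    _ ≤ (2 * n / c) * Real.exp (c * x / (2 * n)) := by
        have := Real.add_one_le_exp (c * x / (2 * n))
        have hpos : (0:ℝ) ≤ 2 * n / c := by positivity
        apply mul_le_mul_of_nonneg_left (by linarith) hpos
  have h3 : (1 + x) ^ (n : ℕ) ≤ (2 * n / c) ^ n * Real.exp (c * x / 2) := by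
    calc (1 + x) ^ (n : ℕ) ≤ ((2 * n / c) * Real.exp (c * x / (2 * n))) ^ n :=
          pow_le_pow_left₀ (by linarith) h2 n
    _ = (2 * n / c) ^ n * Real.exp (c * x / (2 * n)) ^ n := by rw [mul_pow]
    _ = (2 * n / c) ^ n * Real.exp (c * x / 2) := by
        rw [← Real.exp_nat_mul]
        congr 1
        field_simp
  calc (1 + x) ^ r * Real.exp (-(c * x))
      ≤ ((2 * n / c) ^ n * Real.exp (c * x / 2)) * Real.exp (-(c * x)) := by
        apply mul_le_mul_of_nonneg_right (le_trans h1 h3) (Real.exp_pos _).le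
    _ = (2 * n / c) ^ n * Real.exp (c * x / 2 - c * x) := by
        rw [mul_assoc, ← Real.exp_add]; ring_nf
    _ ≤ (2 * n / c) ^ n * 1 := by
        apply mul_le_mul_of_nonneg_left _ (by positivity)
        rw [Real.exp_le_one_iff]
        nlinarith [mul_nonneg hc.le hx]
    _ = (2 * n / c) ^ n := mul_one _

/-- A curl-free `ζ₀ ∈ H^q_∥(𝕋³;ℝ³)` generates a potential microflow
`ζ` which is smooth for `t > 0`, remains curl-free (conservative), solves
`j∂ₜζ − (α+γ)Δζ − (α/3+β−γ)∇div ζ + 2κζ = 0`, and attains `ζ(0) = ζ₀` in `H^q`.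
In particular `(u,p,ω) = (0,0,ζ)` solves the micropolar equations with `f = g = 0`. -/
theorem potentialMicroflow_exists (q j α β γ κ : ℝ)
    (hj : 0 < j) (hα : 0 < α) (hβ : 0 < β) (hγ : 0 ≤ γ) (hκ : 0 < κ)
    (ζ₀ : TCoeffs) (h0 : ζ₀ 0 = 0) (hsym : RealSym ζ₀)
    (hpar : ∀ k, ∃ c : ℂ, ζ₀ k = c • kC k)
    (hq : Summable fun k => (1 + kns k) ^ q * ‖ζ₀ k‖ ^ 2) :
    -- ζ is conservative (curl-free) for all time
    (∀ t k, ∃ c : ℂ, potentialMicroflow j α β κ ζ₀ t k = c • kC k) ∧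
    -- ζ(t) is smooth for t > 0: its coefficients lie in every Sobolev class
    (∀ t : ℝ, 0 < t → ∀ s : ℝ,
      Summable fun k => (1 + kns k) ^ s * ‖potentialMicroflow j α β κ ζ₀ t k‖ ^ 2) ∧
    -- ζ solves the damped Lamé equation (Fourier side), for all t > 0
    (∀ t : ℝ, 0 < t → ∀ k,
      HasDerivAt (fun s => potentialMicroflow j α β κ ζ₀ s k)
        ((-(1 / j) * (4 * Real.pi ^ 2 * (4 * α / 3 + β) * kns k + 2 * κ)) •
          potentialMicroflow j α β κ ζ₀ t k) t ∧
      j • ((-(1 / j) * (4 * Real.pi ^ 2 * (4 * α / 3 + β) * kns k + 2 * κ)) •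
            potentialMicroflow j α β κ ζ₀ t k) +
        (4 * Real.pi ^ 2 * (α + γ) * kns k) • potentialMicroflow j α β κ ζ₀ t k +
        (4 * Real.pi ^ 2 * (α / 3 + β - γ)) •
          (dotk k (potentialMicroflow j α β κ ζ₀ t k) • kC k) +
        (2 * κ) • potentialMicroflow j α β κ ζ₀ t k = 0) ∧
    -- the initial data is attained in the H^q topology
    Tendsto (fun t => ∑' k, (1 + kns k) ^ q * ‖potentialMicroflow j α β κ ζ₀ t k - ζ₀ k‖ ^ 2)
      (nhdsWithin 0 (Set.Ioi 0)) (nhds 0) := by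
  have hpi := Real.pi_pos
  set A : ℝ := 4 * Real.pi ^ 2 * (4 * α / 3 + β) with hA_def
  have hA : 0 < A := by positivity
  -- Part 1: conservative
  have part1 : ∀ t k, ∃ c : ℂ, potentialMicroflow j α β κ ζ₀ t k = c • kC k := by
    intro t k
    obtain ⟨c, hc⟩ := hpar k
    exact ⟨Real.exp (-(t / j) * (A * kns k + 2 * κ)) • c, by
      show Real.exp _ • ζ₀ k = _
      rw [hc, smul_assoc]⟩
  refine ⟨part1, ?_, ?_, ?_⟩
  · -- Part 2: smoothness
    intro t ht s
    obtain ⟨M, hM⟩ := aux_poly_exp_bound (s - q) (2 * (t / j) * A) (by positivity)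
    refine Summable.of_nonneg_of_le ?_ ?_ (hq.mul_left M)
    · intro k
      have h1 : (0:ℝ) < 1 + kns k := by linarith [kns_nonneg k]
      exact mul_nonneg (Real.rpow_nonneg h1.le s) (sq_nonneg _)
    · intro k
      have hx := kns_nonneg k
      have h1 : (0:ℝ) < 1 + kns k := by linarith
      have hnorm : ‖potentialMicroflow j α β κ ζ₀ t k‖ ^ 2 =
          Real.exp (-(t / j) * (A * kns k + 2 * κ)) ^ 2 * ‖ζ₀ k‖ ^ 2 := by
        show ‖Real.exp _ • ζ₀ k‖ ^ 2 = _
        rw [norm_smul, mul_pow, Real.norm_eq_abs, abs_of_pos (Real.exp_pos _)]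
      have hexp : Real.exp (-(t / j) * (A * kns k + 2 * κ)) ^ 2 ≤
          Real.exp (-(2 * (t / j) * A * kns k)) := by
        rw [← Real.exp_nat_mul, Real.exp_le_exp]
        push_cast
        have : 0 < t / j := by positivity
        nlinarith
      calc (1 + kns k) ^ s * ‖potentialMicroflow j α β κ ζ₀ t k‖ ^ 2
          = (1 + kns k) ^ (s - q) * Real.exp (-(t / j) * (A * kns k + 2 * κ)) ^ 2 *
              ((1 + kns k) ^ q * ‖ζ₀ k‖ ^ 2) := by
            rw [hnorm,
              show (1 + kns k) ^ s = (1 + kns k) ^ (s - q) * (1 + kns k) ^ q from by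
                rw [← Real.rpow_add h1, sub_add_cancel]]
            ring
        _ ≤ ((1 + kns k) ^ (s - q) * Real.exp (-(2 * (t / j) * A * kns k))) *
              ((1 + kns k) ^ q * ‖ζ₀ k‖ ^ 2) := by
            apply mul_le_mul_of_nonneg_right _ (mul_nonneg (Real.rpow_nonneg h1.le q) (sq_nonneg _))
            exact mul_le_mul_of_nonneg_left hexp (Real.rpow_nonneg h1.le _)
        _ ≤ M * ((1 + kns k) ^ q * ‖ζ₀ k‖ ^ 2) := by
            apply mul_le_mul_of_nonneg_right _ (mul_nonneg (Real.rpow_nonneg h1.le q) (sq_nonneg _))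
            exact hM (kns k) hx
  · -- Part 3: derivative + Lamé equation
    intro t ht k
    set a : ℝ := -(1 / j) * (A * kns k + 2 * κ) with ha_def
    have hfun : ∀ s : ℝ, potentialMicroflow j α β κ ζ₀ s k = Real.exp (s * a) • ζ₀ k := by
      intro s
      show Real.exp (-(s / j) * (A * kns k + 2 * κ)) • ζ₀ k = _
      congr 1
      rw [ha_def]
      ring
    constructor
    · have hd : HasDerivAt (fun s : ℝ => Real.exp (s * a)) (Real.exp (t * a) * a) t := by
        have h1 : HasDerivAt (fun s : ℝ => s * a) a t := by
          simpa using (hasDerivAt_id t).mul_const a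
        exact (Real.hasDerivAt_exp (t * a)).comp t h1
      have := hd.smul_const (ζ₀ k)
      simp only [hfun]
      rw [smul_smul, mul_comm a]
      exact this
    · obtain ⟨c, hc⟩ := part1 t k
      set v := potentialMicroflow j α β κ ζ₀ t k with hv
      have hdot : dotk k v • kC k = (kns k) • v := by
        rw [hc]
        have h1 : dotk k (c • kC k) = c * (kns k : ℂ) := by
          simp only [dotk, kC, PiLp.smul_apply, PiLp.toLp_apply, smul_eq_mul, kns]
          push_cast
          rw [Finset.mul_sum]
          exact Finset.sum_congr rfl fun i _ => by ring
        rw [h1, ← Complex.coe_smul, smul_smul, mul_comm]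
      rw [hdot]
      have hcoef : j * (-(1 / j) * (A * kns k + 2 * κ)) + 4 * Real.pi ^ 2 * (α + γ) * kns k +
          4 * Real.pi ^ 2 * (α / 3 + β - γ) * kns k + 2 * κ = 0 := by
        rw [hA_def]
        field_simp
        ring
      have hlhs : j • ((-(1 / j) * (A * kns k + 2 * κ)) • v) +
          (4 * Real.pi ^ 2 * (α + γ) * kns k) • v +
          (4 * Real.pi ^ 2 * (α / 3 + β - γ)) • (kns k • v) + (2 * κ) • v =
          (j * (-(1 / j) * (A * kns k + 2 * κ)) + 4 * Real.pi ^ 2 * (α + γ) * kns k +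
            4 * Real.pi ^ 2 * (α / 3 + β - γ) * kns k + 2 * κ) • v := by
        module
      rw [hlhs, hcoef, zero_smul]
  · -- Part 4: initial data in H^q
    have := tendsto_tsum_of_dominated_convergence
      (f := fun (t : ℝ) (k : Fin 3 → ℤ) =>
        (1 + kns k) ^ q * ‖potentialMicroflow j α β κ ζ₀ t k - ζ₀ k‖ ^ 2)
      (g := fun _ => (0:ℝ))
      (bound := fun k => (1 + kns k) ^ q * ‖ζ₀ k‖ ^ 2)
      (𝓕 := nhdsWithin (0:ℝ) (Set.Ioi 0)) hq ?_ ?_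
    · simpa using this
    · intro k
      have hcont : Continuous fun t : ℝ =>
          (1 + kns k) ^ q * ‖potentialMicroflow j α β κ ζ₀ t k - ζ₀ k‖ ^ 2 := by
        unfold potentialMicroflow
        fun_prop
      have h0' : (1 + kns k) ^ q * ‖potentialMicroflow j α β κ ζ₀ 0 k - ζ₀ k‖ ^ 2 = 0 := by
        show (1 + kns k) ^ q * ‖Real.exp _ • ζ₀ k - ζ₀ k‖ ^ 2 = 0
        norm_num
      have := (hcont.tendsto 0).mono_left (nhdsWithin_le_nhds (s := Set.Ioi (0:ℝ)))
      rwa [h0'] at this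
    · filter_upwards [self_mem_nhdsWithin] with t ht k
      have hx := kns_nonneg k
      have h1 : (0:ℝ) < 1 + kns k := by linarith
      have ht' : (0:ℝ) < t := ht
      set e := Real.exp (-(t / j) * (A * kns k + 2 * κ)) with he_def
      have he1 : e ≤ 1 := by
        rw [he_def, Real.exp_le_one_iff]
        have h2 : 0 < A * kns k + 2 * κ := by nlinarith
        have : 0 < t / j := by positivity
        nlinarith
      have he0 : 0 < e := Real.exp_pos _
      have hdiff : ‖potentialMicroflow j α β κ ζ₀ t k - ζ₀ k‖ ≤ ‖ζ₀ k‖ := by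
        have : potentialMicroflow j α β κ ζ₀ t k - ζ₀ k = (e - 1) • ζ₀ k := by
          show e • ζ₀ k - ζ₀ k = _
          rw [sub_smul, one_smul]
        rw [this, norm_smul, Real.norm_eq_abs]
        have : |e - 1| ≤ 1 := abs_le.mpr ⟨by linarith, by linarith⟩
        nlinarith [norm_nonneg (ζ₀ k)]
      have hnn : (0:ℝ) ≤ (1 + kns k) ^ q * ‖potentialMicroflow j α β κ ζ₀ t k - ζ₀ k‖ ^ 2 :=
        mul_nonneg (Real.rpow_nonneg h1.le q) (sq_nonneg _)
      rw [Real.norm_eq_abs, abs_of_nonneg hnn]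
      apply mul_le_mul_of_nonneg_left _ (Real.rpow_nonneg h1.le q)
      exact pow_le_pow_left₀ (norm_nonneg _) hdiff 2
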